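/- Let φ ∈ H^∞ with ‖φ‖_∞ ≤ 1 and let u be the inner factor of φ (so φ = uG with u inner and G outer). For any inner function I, every unit vector belonging to I·K_u is T_φ-inner. -/

import Mathlib

open MeasureTheory Complex Filter Metric

/-- Normalized Lebesgue (arclength) measure on the unit circle `𝕋 ⊆ ℂ`. -/
noncomputable def mCirc : Measure ℂ :=
  Measure.map (fun θ : ℝ => Complex.exp (θ * Complex.I))
    ((ENNReal.ofReal (2 * Real.pi))⁻¹ • volume.restrict (Set.Ioc 0 (2 * Real.pi)))

/-- `f` is (the boundary function of) a function in the Hardy space `H²`: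
it is square integrable on `𝕋` and its negative Fourier coefficients vanish. -/
def MemH2 (f : ℂ → ℂ) : Prop :=
  MemLp f 2 mCirc ∧ ∀ n : ℕ, 1 ≤ n → ∫ z, f z * z ^ n ∂mCirc = 0

/-- `u` is (the boundary function of) an inner function: it is unimodular a.e. on `𝕋`
and its negative Fourier coefficients vanish. -/
def InnerBdry (u : ℂ → ℂ) : Prop :=
  (∀ᵐ z ∂mCirc, ‖u z‖ = 1) ∧ ∀ n : ℕ, 1 ≤ n → ∫ z, u z * z ^ n ∂mCirc = 0

/-- `φ` is (the boundary function of) a function in `H^∞`. -/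
def HinfBdry (φ : ℂ → ℂ) : Prop :=
  MemLp φ ⊤ mCirc ∧ ∀ n : ℕ, 1 ≤ n → ∫ z, φ z * z ^ n ∂mCirc = 0

/-- `f` is a `T_φ`-inner vector: a unit vector with `⟨φ^n f, f⟩ = 0` for all `n ≥ 1`. -/
def TInner (φ f : ℂ → ℂ) : Prop :=
  (∫ z, ‖f z‖ ^ 2 ∂mCirc) = 1 ∧
  ∀ n : ℕ, 1 ≤ n → ∫ z, (φ z) ^ n * (f z * (starRingEnd ℂ) (f z)) ∂mCirc = 0

/-- `f` belongs to the model space `K_u = H² ⊖ u H²`. -/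
def InKu (u f : ℂ → ℂ) : Prop :=
  MemH2 f ∧ ∀ n : ℕ, ∫ z, f z * (starRingEnd ℂ) (u z * z ^ n) ∂mCirc = 0

/-- `G` is (the boundary function of) an outer function in `H²`: polynomial multiples
of `G` are dense in `H²` (`G` is a cyclic vector for the shift). -/
def OuterBdry (G : ℂ → ℂ) : Prop :=
  MemH2 G ∧ ∀ h : ℂ → ℂ, MemH2 h → ∀ ε : ℝ, 0 < ε →
    ∃ (N : ℕ) (c : ℕ → ℂ),
      eLpNorm (fun z => h z - (∑ k ∈ Finset.range N, c k * z ^ k) * G z) 2 mCirc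
        < ENNReal.ofReal ε

open scoped ComplexConjugate

open AddCircle

instance s3_fact : Fact (0 < 2 * Real.pi) := ⟨by positivity⟩

noncomputable def s3Q : AddCircle (2 * Real.pi) → ℂ := fun x => (toCircle x : ℂ)

lemma s3Q_cont : Continuous s3Q := continuous_subtype_val.comp continuous_toCircle

lemma s3Q_mk (θ : ℝ) : s3Q (θ : AddCircle (2 * Real.pi)) = Complex.exp (θ * Complex.I) := by
  have h : (2 * Real.pi) ≠ 0 := by positivity
  simp [s3Q, toCircle_apply_mk, Circle.coe_exp, div_self h]

lemma s3Q_norm (x : AddCircle (2 * Real.pi)) : ‖s3Q x‖ = 1 := by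
  rw [show s3Q x = ((toCircle x : Circle) : ℂ) from rfl]
  exact Circle.norm_coe _

lemma s3_map : Measure.map s3Q haarAddCircle = mCirc := by
  have hmk : Measurable ((↑) : ℝ → AddCircle (2 * Real.pi)) :=
    AddCircle.measurable_mk'
  have h1 : (fun θ : ℝ => Complex.exp (θ * Complex.I))
      = s3Q ∘ ((↑) : ℝ → AddCircle (2 * Real.pi)) := funext fun θ => (s3Q_mk θ).symm
  have h0 : Measure.map ((↑) : ℝ → AddCircle (2 * Real.pi))
      (volume.restrict (Set.Ioc (0:ℝ) (2 * Real.pi)))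
        = (volume : Measure (AddCircle (2 * Real.pi))) := by
    have := (AddCircle.measurePreserving_mk (2 * Real.pi) 0).map_eq
    simpa using this
  rw [mCirc, h1, ← Measure.map_map s3Q_cont.measurable hmk, Measure.map_smul, h0,
    volume_eq_smul_haarAddCircle, smul_smul, ENNReal.inv_mul_cancel, one_smul]
  · exact (ENNReal.ofReal_pos.mpr (by positivity)).ne'
  · exact ENNReal.ofReal_ne_top

lemma s3_mp : MeasurePreserving s3Q haarAddCircle mCirc := ⟨s3Q_cont.measurable, s3_map⟩

instance : IsProbabilityMeasure mCirc :=
  s3_map ▸ Measure.isProbabilityMeasure_map s3Q_cont.measurable.aemeasurable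

lemma s3_integral (F : ℂ → ℂ) (hF : AEStronglyMeasurable F mCirc) :
    ∫ z, F z ∂mCirc = ∫ x, F (s3Q x) ∂haarAddCircle := by
  rw [← s3_map] at hF ⊢
  exact integral_map s3Q_cont.measurable.aemeasurable hF

lemma s3_memLp {F : ℂ → ℂ} (hF : MemLp F 2 mCirc) : MemLp (F ∘ s3Q) 2 haarAddCircle := by
  have h1 := hF.aestronglyMeasurable
  rw [← s3_map] at hF h1
  exact (memLp_map_measure_iff h1 s3Q_cont.measurable.aemeasurable).mp hF

lemma s3_fourier_pow (j : ℕ) (x : AddCircle (2 * Real.pi)) :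
    fourier (j : ℤ) x = s3Q x ^ j := by
  induction j with
  | zero => simp [fourier_zero]
  | succ n ih =>
    have : ((n : ℤ) + 1) = (n : ℤ) + 1 := rfl
    push_cast
    rw [fourier_add, ih, fourier_one, pow_succ]
    rfl

lemma s3_ae_norm_one : ∀ᵐ z ∂mCirc, ‖z‖ = 1 := by
  rw [← s3_map]
  refine (ae_map_iff s3Q_cont.measurable.aemeasurable ?_).mpr
    (Eventually.of_forall fun x => s3Q_norm x)
  exact (isClosed_eq continuous_norm continuous_const).measurableSet

lemma s3_moment (n : ℕ) (hn : 1 ≤ n) : ∫ z, z ^ n ∂mCirc = 0 := by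
  rw [s3_integral _ (continuous_pow n).aestronglyMeasurable]
  have h : ∀ x : AddCircle (2 * Real.pi), s3Q x ^ n = fourier (n : ℤ) x :=
    fun x => (s3_fourier_pow n x).symm
  simp_rw [h]
  have hn' : (n : ℤ) ≠ 0 := by exact_mod_cast Nat.one_le_iff_ne_zero.mp hn
  exact integral_eq_zero_of_add_right_eq_neg
    (fourier_add_half_inv_index hn' s3_fact.out)

open ComplexConjugate in
lemma s3_ML {c v : ℂ → ℂ} (hc : MemLp c 2 mCirc) (hv : MemLp v 2 mCirc)
    (H1 : ∀ m : ℕ, 1 ≤ m → ∫ z, v z * z ^ m ∂mCirc = 0)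
    (H2 : ∀ j : ℕ, ∫ z, c z * z ^ j ∂mCirc = 0) :
    ∫ z, c z * v z ∂mCirc = 0 := by
  have hc' : MemLp (c ∘ s3Q) 2 haarAddCircle := s3_memLp hc
  have hv' : MemLp (v ∘ s3Q) 2 haarAddCircle := s3_memLp hv
  have hcc' : MemLp (fun x => conj ((c ∘ s3Q) x)) 2 haarAddCircle := by
    refine hc'.of_le ?_ (Eventually.of_forall fun x => ?_)
    · exact RCLike.continuous_conj.comp_aestronglyMeasurable hc'.aestronglyMeasurable
    · simp
  set C : Lp ℂ 2 haarAddCircle := hcc'.toLp _ with hC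
  set V : Lp ℂ 2 haarAddCircle := hv'.toLp _ with hV
  have hCae : (C : AddCircle (2 * Real.pi) → ℂ) =ᵐ[haarAddCircle]
      fun x => conj (c (s3Q x)) := hcc'.coeFn_toLp
  have hVae : (V : AddCircle (2 * Real.pi) → ℂ) =ᵐ[haarAddCircle]
      fun x => v (s3Q x) := hv'.coeFn_toLp
  -- each summand of the Parseval expansion vanishes
  have hterm : ∀ i : ℤ,
      (innerSL ℂ C) ((fourierBasis.repr V i) • (fourierBasis i : Lp ℂ 2 haarAddCircle)) = 0 := by
    intro i
    rcases lt_or_ge i 0 with hi | hi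
    · -- negative index : coefficient of V vanishes
      have h0 : fourierBasis.repr V i = 0 := by
        rw [fourierBasis_repr]
        obtain ⟨m, hm, rfl⟩ : ∃ m : ℕ, 1 ≤ m ∧ i = -(m : ℤ) :=
          ⟨i.natAbs, by omega, by omega⟩
        have h1 : ∫ t, fourier (-(-(m:ℤ))) t • (V : AddCircle (2 * Real.pi) → ℂ) t ∂haarAddCircle
            = ∫ t, v (s3Q t) * (s3Q t) ^ m ∂haarAddCircle := by
          refine integral_congr_ae ?_
          filter_upwards [hVae] with t ht
          rw [ht, smul_eq_mul, neg_neg, s3_fourier_pow, mul_comm]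
        have h2 : ∫ t, v (s3Q t) * (s3Q t) ^ m ∂haarAddCircle = ∫ z, v z * z ^ m ∂mCirc :=
          (s3_integral _ (hv.aestronglyMeasurable.mul
            (continuous_pow m).aestronglyMeasurable)).symm
        rw [fourierCoeff, h1, h2, H1 m hm]
      rw [h0, zero_smul, map_zero]
    · obtain ⟨j, rfl⟩ : ∃ j : ℕ, i = (j : ℤ) := ⟨i.toNat, by omega⟩
      have h0 : (innerSL ℂ C) (fourierBasis (j:ℤ) : Lp ℂ 2 haarAddCircle) = 0 := by
        have hbase : ((fourierBasis (j:ℤ) : Lp ℂ 2 haarAddCircle) :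
            AddCircle (2 * Real.pi) → ℂ) =ᵐ[haarAddCircle] fourier (j:ℤ) := by
          rw [coe_fourierBasis]; exact coeFn_fourierLp 2 (j:ℤ)
        have h1 : (innerSL ℂ C) (fourierBasis (j:ℤ) : Lp ℂ 2 haarAddCircle)
            = ∫ x, c (s3Q x) * (s3Q x) ^ j ∂haarAddCircle := by
          rw [innerSL_apply_apply, MeasureTheory.L2.inner_def]
          refine integral_congr_ae ?_
          filter_upwards [hCae, hbase] with x h1 h2
          rw [RCLike.inner_apply, h1, h2, s3_fourier_pow]
          simp [mul_comm]
        rw [h1]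
        exact ((s3_integral (fun z => c z * z ^ j) (hc.aestronglyMeasurable.mul
          (continuous_pow j).aestronglyMeasurable)).symm).trans (H2 j)
      rw [ContinuousLinearMap.map_smul, h0, smul_zero]
  have hsum : HasSum (fun i : ℤ =>
      (innerSL ℂ C) ((fourierBasis.repr V i) • (fourierBasis i : Lp ℂ 2 haarAddCircle)))
      ((innerSL ℂ C) V) := (innerSL ℂ C).hasSum (fourierBasis.hasSum_repr V)
  have hzero : (innerSL ℂ C) V = 0 := by
    have h0 : HasSum (fun _ : ℤ => (0:ℂ)) ((innerSL ℂ C) V) := by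
      simpa only [hterm] using hsum
    exact h0.unique hasSum_zero
  have hstep : ∫ z, c z * v z ∂mCirc
      = ∫ x, c (s3Q x) * v (s3Q x) ∂haarAddCircle :=
    s3_integral (fun z => c z * v z) (hc.aestronglyMeasurable.mul hv.aestronglyMeasurable)
  have hfin : ∫ x, c (s3Q x) * v (s3Q x) ∂haarAddCircle = (innerSL ℂ C) V := by
    rw [innerSL_apply_apply, MeasureTheory.L2.inner_def]
    refine integral_congr_ae ?_
    filter_upwards [hCae, hVae] with x h1 h2
    rw [RCLike.inner_apply, h1, h2]
    simp [mul_comm]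
  rw [hstep, hfin, hzero]

open scoped ENNReal

lemma s3_linf_bound {φ : ℂ → ℂ} (hφ1 : eLpNorm φ ⊤ mCirc ≤ 1) :
    ∀ᵐ z ∂mCirc, ‖φ z‖ ≤ 1 := by
  have h := ae_le_eLpNormEssSup (f := φ) (μ := mCirc)
  rw [eLpNorm_exponent_top] at hφ1
  filter_upwards [h] with z hz
  have h2 : (‖φ z‖₊ : ℝ≥0∞) ≤ 1 := le_trans hz hφ1
  have h3 : ‖φ z‖₊ ≤ 1 := by simpa using h2
  exact_mod_cast h3

lemma s3_one_H2 : MemH2 (fun _ : ℂ => 1) :=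
  ⟨memLp_const 1, fun n hn => by simpa using s3_moment n hn⟩

lemma s3_G_ne {G : ℂ → ℂ} (hG : OuterBdry G) : ∀ᵐ z ∂mCirc, G z ≠ 0 := by
  have hGm := hG.1.1.aestronglyMeasurable
  set G₀ := hGm.mk G with hG₀
  have hGG₀ : G =ᵐ[mCirc] G₀ := hGm.ae_eq_mk
  set A : Set ℂ := {z | G₀ z = 0} with hA
  have hAm : MeasurableSet A :=
    hGm.stronglyMeasurable_mk.measurable (MeasurableSet.singleton 0)
  have key : ∀ ε : ℝ, 0 < ε → (mCirc A) ^ ((2:ℝ)⁻¹) < ENNReal.ofReal ε := by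
    intro ε hε
    obtain ⟨N, c, hlt⟩ := hG.2 (fun _ => 1) s3_one_H2 ε hε
    set F : ℂ → ℂ := fun z => 1 - (∑ k ∈ Finset.range N, c k * z ^ k) * G z with hF
    have hres : F =ᵐ[mCirc.restrict A] fun _ => (1:ℂ) := by
      filter_upwards [ae_restrict_of_ae hGG₀, ae_restrict_mem hAm] with z h1 h2
      simp only [F]
      rw [h1, show G₀ z = 0 from h2, mul_zero, sub_zero]
    have h1 : eLpNorm (fun _ : ℂ => (1:ℂ)) 2 (mCirc.restrict A) ≤ eLpNorm F 2 mCirc :=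
      le_trans (le_of_eq (eLpNorm_congr_ae hres.symm))
        (eLpNorm_mono_measure F Measure.restrict_le_self)
    have h2 : eLpNorm (fun _ : ℂ => (1:ℂ)) 2 (mCirc.restrict A)
        = (mCirc A) ^ ((2:ℝ)⁻¹) := by
      rw [eLpNorm_const' (1:ℂ) (by norm_num) (by norm_num)]
      simp [Measure.restrict_apply_univ, one_div]
    calc (mCirc A) ^ ((2:ℝ)⁻¹) = _ := h2.symm
      _ ≤ eLpNorm F 2 mCirc := h1
      _ < ENNReal.ofReal ε := hlt
  have hA0 : mCirc A = 0 := by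
    by_contra hne
    have hfin : mCirc A ≠ ⊤ := (measure_lt_top mCirc A).ne
    set a : ℝ≥0∞ := (mCirc A) ^ ((2:ℝ)⁻¹) with ha
    have ha0 : a ≠ 0 := by
      simp only [ha, ne_eq, ENNReal.rpow_eq_zero_iff]
      push_neg
      constructor
      · intro h; exact absurd h hne
      · intro h; exact absurd h hfin
    have hafin : a ≠ ⊤ := by
      simp only [ha, ne_eq, ENNReal.rpow_eq_top_iff]
      push_neg
      constructor
      · intro h; norm_num
      · intro h; exact absurd h hfin
    have hpos : 0 < a.toReal := ENNReal.toReal_pos ha0 hafin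
    have := key (a.toReal / 2) (by linarith)
    have hlt2 : ENNReal.ofReal (a.toReal / 2) < a := by
      calc ENNReal.ofReal (a.toReal / 2) < ENNReal.ofReal a.toReal :=
            (ENNReal.ofReal_lt_ofReal_iff hpos).mpr (by linarith)
        _ = a := ENNReal.ofReal_toReal hafin
    exact absurd this (not_lt.mpr hlt2.le)
  have : ∀ᵐ z ∂mCirc, G₀ z ≠ 0 := by
    rw [ae_iff]
    simpa [A] using hA0
  filter_upwards [hGG₀, this] with z h1 h2
  rw [h1]; exact h2

/-- if `φ = u G` with `u` inner and `G` outer, then for any inner `I`,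
every unit vector `f ∈ I·K_u` is `T_φ`-inner. -/
theorem statement3 (φ u G I f g : ℂ → ℂ)
    (hφ : HinfBdry φ) (hφ1 : eLpNorm φ ⊤ mCirc ≤ 1)
    (hu : InnerBdry u) (hG : OuterBdry G)
    (hfact : ∀ᵐ z ∂mCirc, φ z = u z * G z)
    (hI : InnerBdry I)
    (hg : InKu u g)
    (hfg : ∀ᵐ z ∂mCirc, f z = I z * g z)
    (hunit : ∫ z, ‖f z‖ ^ 2 ∂mCirc = 1) :
    TInner φ f := by
  have hφm := hφ.1.aestronglyMeasurable
  have hGm := hG.1.1.aestronglyMeasurable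
  have hg2 : MemLp g 2 mCirc := hg.1.1
  have hgm := hg2.aestronglyMeasurable
  have hgmc : AEStronglyMeasurable (fun z => conj (g z)) mCirc :=
    RCLike.continuous_conj.comp_aestronglyMeasurable hgm
  have hGne : ∀ᵐ z ∂mCirc, G z ≠ 0 := s3_G_ne hG
  set u₀ : ℂ → ℂ := fun z => φ z / G z with hu₀
  have hu₀m : AEStronglyMeasurable u₀ mCirc :=
    (hφm.aemeasurable.div hGm.aemeasurable).aestronglyMeasurable
  have hueq : ∀ᵐ z ∂mCirc, u z = u₀ z := by
    filter_upwards [hfact, hGne] with z h1 h2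
    show u z = φ z / G z
    rw [h1, mul_div_cancel_right₀ _ h2]
  have hu₀norm : ∀ᵐ z ∂mCirc, ‖u₀ z‖ = 1 := by
    filter_upwards [hu.1, hueq] with z h1 h2
    rw [← h2]; exact h1
  have hfact₀ : ∀ᵐ z ∂mCirc, φ z = u₀ z * G z := by
    filter_upwards [hfact, hueq] with z h1 h2
    rw [h1, h2]
  have hφle : ∀ᵐ z ∂mCirc, ‖φ z‖ ≤ 1 := s3_linf_bound hφ1
  -- membership of φ^k g in L²
  have hvmem : ∀ k : ℕ, MemLp (fun z => φ z ^ k * g z) 2 mCirc := by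
    intro k
    refine hg2.of_le (((continuous_pow k).comp_aestronglyMeasurable hφm).mul hgm) ?_
    filter_upwards [hφle] with z hz
    rw [norm_mul, norm_pow]
    calc ‖φ z‖ ^ k * ‖g z‖ ≤ 1 ^ k * ‖g z‖ := by gcongr
      _ = ‖g z‖ := by rw [one_pow, one_mul]
  -- φ^k g ∈ H² (vanishing negative Fourier coefficients)
  have hH2 : ∀ k : ℕ, ∀ m : ℕ, 1 ≤ m → ∫ z, (φ z ^ k * g z) * z ^ m ∂mCirc = 0 := by
    intro k
    induction k with
    | zero =>
      intro m hm
      have := hg.1.2 m hm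
      simpa using this
    | succ k ih =>
      intro m hm
      have hcm : MemLp (fun z => φ z * z ^ m) 2 mCirc := by
        refine (memLp_const (1:ℂ)).of_le (hφm.mul (continuous_pow m).aestronglyMeasurable) ?_
        filter_upwards [hφle, s3_ae_norm_one] with z h1 h2
        rw [norm_mul, norm_pow, h2, one_pow, mul_one]
        simpa using h1
      have hml := s3_ML hcm (hvmem k) ih (fun j => by
        have h9 : ∫ z, (fun z => φ z * z ^ m) z * z ^ j ∂mCirc
            = ∫ z, φ z * z ^ (m + j) ∂mCirc :=
          integral_congr_ae (Eventually.of_forall fun z => by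
            show (φ z * z ^ m) * z ^ j = φ z * z ^ (m + j)
            rw [pow_add]; ring)
        rw [h9]; exact hφ.2 (m + j) (le_trans hm (Nat.le_add_right m j)))
      have h8 : ∫ z, (φ z ^ (k+1) * g z) * z ^ m ∂mCirc
          = ∫ z, (fun z => φ z * z ^ m) z * (fun z => φ z ^ k * g z) z ∂mCirc :=
        integral_congr_ae (Eventually.of_forall fun z => by
          show (φ z ^ (k+1) * g z) * z ^ m = (φ z * z ^ m) * (φ z ^ k * g z)
          ring)
      rw [h8, hml]
  refine ⟨hunit, fun n hn => ?_⟩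
  have e1 : ∫ z, φ z ^ n * (f z * conj (f z)) ∂mCirc
      = ∫ z, (u₀ z * conj (g z)) * (conj (u₀ z) * (φ z ^ n * g z)) ∂mCirc := by
    refine integral_congr_ae ?_
    filter_upwards [hfg, hI.1, hu₀norm] with z h1 h2 h3
    have hI1 : I z * conj (I z) = 1 := by
      rw [Complex.mul_conj]
      simp [Complex.normSq_eq_norm_sq, h2]
    have hu1 : u₀ z * conj (u₀ z) = 1 := by
      rw [Complex.mul_conj]
      simp [Complex.normSq_eq_norm_sq, h3]
    rw [h1, map_mul]
    calc φ z ^ n * (I z * g z * (conj (I z) * conj (g z)))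
        = (I z * conj (I z)) * (φ z ^ n * (g z * conj (g z))) := by ring
      _ = φ z ^ n * (g z * conj (g z)) := by rw [hI1, one_mul]
      _ = (u₀ z * conj (u₀ z)) * (φ z ^ n * (g z * conj (g z))) := by rw [hu1, one_mul]
      _ = (u₀ z * conj (g z)) * (conj (u₀ z) * (φ z ^ n * g z)) := by ring
  rw [e1]
  have hcmem : MemLp (fun z => u₀ z * conj (g z)) 2 mCirc := by
    refine hg2.of_le (hu₀m.mul hgmc) ?_
    filter_upwards [hu₀norm] with z hz
    rw [norm_mul, hz, one_mul, RCLike.norm_conj]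
  have hvmem' : MemLp (fun z => conj (u₀ z) * (φ z ^ n * g z)) 2 mCirc := by
    refine hg2.of_le ((RCLike.continuous_conj.comp_aestronglyMeasurable hu₀m).mul
      (((continuous_pow n).comp_aestronglyMeasurable hφm).mul hgm)) ?_
    filter_upwards [hu₀norm, hφle] with z h1 h2
    rw [norm_mul, RCLike.norm_conj, h1, one_mul, norm_mul, norm_pow]
    calc ‖φ z‖ ^ n * ‖g z‖ ≤ 1 ^ n * ‖g z‖ := by gcongr
      _ = ‖g z‖ := by rw [one_pow, one_mul]
  refine s3_ML hcmem hvmem' ?_ ?_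
  · -- H1 : v ∈ H²
    intro m hm
    have hnn : n - 1 + 1 = n := Nat.succ_pred_eq_of_pos hn
    have e2 : ∫ z, (conj (u₀ z) * (φ z ^ n * g z)) * z ^ m ∂mCirc
        = ∫ z, (fun z => G z * z ^ m) z * (fun z => φ z ^ (n-1) * g z) z ∂mCirc := by
      refine integral_congr_ae ?_
      filter_upwards [hfact₀, hu₀norm] with z h1 h2
      have hu1 : conj (u₀ z) * u₀ z = 1 := by
        rw [mul_comm, Complex.mul_conj]
        simp [Complex.normSq_eq_norm_sq, h2]
      show (conj (u₀ z) * (φ z ^ n * g z)) * z ^ m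
          = (G z * z ^ m) * (φ z ^ (n-1) * g z)
      conv_lhs => rw [← hnn, pow_succ']
      nth_rewrite 1 [h1]
      linear_combination (G z * z ^ m * (φ z ^ (n-1) * g z)) * hu1
    rw [e2]
    refine s3_ML ?_ (hvmem (n-1)) (hH2 (n-1)) ?_
    · refine hG.1.1.of_le (hGm.mul (continuous_pow m).aestronglyMeasurable) ?_
      filter_upwards [s3_ae_norm_one] with z hz
      rw [norm_mul, norm_pow, hz, one_pow, mul_one]
    · intro j
      have h9 : ∫ z, (fun z => G z * z ^ m) z * z ^ j ∂mCirc
          = ∫ z, G z * z ^ (m + j) ∂mCirc :=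
        integral_congr_ae (Eventually.of_forall fun z => by
          show (G z * z ^ m) * z ^ j = G z * z ^ (m + j)
          rw [pow_add]; ring)
      rw [h9]; exact hG.1.2 (m + j) (le_trans hm (Nat.le_add_right m j))
  · -- H2 : pairing with g ⊥ u H²
    intro j
    have h := hg.2 j
    have h' : ∫ z, conj (g z * conj (u z * z ^ j)) ∂mCirc = 0 := by
      rw [integral_conj, h, map_zero]
    calc ∫ z, (u₀ z * conj (g z)) * z ^ j ∂mCirc
        = ∫ z, conj (g z * conj (u z * z ^ j)) ∂mCirc := by
          refine integral_congr_ae ?_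
          filter_upwards [hueq] with z hz
          rw [map_mul, Complex.conj_conj, hz]
          ring
      _ = 0 := h'
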